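/- Let G₂ be the path graph with 4 vertices u, v, w, z and 3 edges, where the endpoint vertices u and z lie in the sample set Y. Then the only global section of the piecewise-linear sheaf PL on G₂ vanishing at u and z is the zero section: any section value at v extending to the left edge lies in span{(0,0,1)}, any section value at w extending to the right edge lies in span{(0,1,0)} (coordinates: value, left slope, right slope), and compatibility over the middle edge forces both to be zero. -/
import Mathlib


/-- for the piecewise-linear sheaf `PL` on the path graph `G₂` with vertices
`u, v, w, z` and three edges (oriented along the path), a global section consists of data
`(yu, su)` and `(yz, sz)` at the endpoint vertices and `(yv, lv, rv)`, `(yw, lw, rw)`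
(value, left slope, right slope) at the interior vertices, subject to the edge
compatibilities `(yu, su) = (yv − lv, lv)`, `(yv, rv) = (yw − lw, lw)` and
`(yw, rw) = (yz − sz, sz)`.  If the section vanishes at the endpoints `u` and `z`
(which lie in the sample set), it is the zero section. -/
theorem pl_path_section_vanishes
    (yu su yv lv rv yw lw rw yz sz : ℝ)
    (he1 : (yu, su) = (yv - lv, lv))
    (he2 : (yv, rv) = (yw - lw, lw))
    (he3 : (yw, rw) = (yz - sz, sz))
    (hu : yu = 0 ∧ su = 0) (hz : yz = 0 ∧ sz = 0) :
    yv = 0 ∧ lv = 0 ∧ rv = 0 ∧ yw = 0 ∧ lw = 0 ∧ rw = 0 := by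
  simp only [Prod.mk.injEq] at he1 he2 he3
  obtain ⟨h1,h2⟩:=he1; obtain ⟨h3,h4⟩:=he2; obtain ⟨h5,h6⟩:=he3
  obtain ⟨hu1,hu2⟩:=hu; obtain ⟨hz1,hz2⟩:=hz
  refine ⟨by linarith, by linarith, by linarith, by linarith, by linarith, by linarith⟩
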